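/- Let R_d(z,w) = (w − z²)³ / ((w + 8z²)(z − 1)(w + 8z² + 4w² + 5wz² − 14zw − 4z³)), complex-differentiable where its denominator is nonzero, and let G_d = 1/R_d, complex-differentiable where w ≠ z². Then: (1) the complex derivative of R_d vanishes at (2/5, 8/5), and R_d(2/5, 8/5) = −1/3; (2) the complex derivative of R_d vanishes at (1/10, −4/5), and R_d(1/10, −4/5) = −9/32; (3) the complex derivative of G_d vanishes at (1, −8) and at (−1/2, −2), and G_d(1, −8) = G_d(−1/2, −2) = 0. -/

import Mathlib

open ContinuousLinearMap

private lemma sq_deriv' {f : ℂ × ℂ → ℂ} {f' : ℂ × ℂ →L[ℂ] ℂ} {x : ℂ × ℂ}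
    (hf : HasFDerivAt f f' x) :
    HasFDerivAt (fun y => f y ^ 2) (((2 : ℂ) * f x) • f') x := by
  have h := hf.mul hf
  have e : (f * f) = fun y => f y ^ 2 := by funext y; rw [Pi.mul_apply]; ring
  rw [e] at h
  have hE : ((2 : ℂ) * f x) • f' = f x • f' + f x • f' := by module
  rw [hE]; exact h

private lemma cube_deriv' {f : ℂ × ℂ → ℂ} {f' : ℂ × ℂ →L[ℂ] ℂ} {x : ℂ × ℂ}
    (hf : HasFDerivAt f f' x) :
    HasFDerivAt (fun y => f y ^ 3) (((3 : ℂ) * f x ^ 2) • f') x := by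
  have h := (sq_deriv' hf).mul hf
  have e : ((fun y => f y ^ 2) * f) = fun y => f y ^ 3 := by funext y; rw [Pi.mul_apply]; ring
  rw [e] at h
  have hE : ((3 : ℂ) * f x ^ 2) • f' = f x ^ 2 • f' + f x • ((2 : ℂ) * f x) • f' := by module
  rw [hE]; exact h

private lemma quot_crit' {N D : ℂ × ℂ → ℂ} {p : ℂ × ℂ} {N' D' : ℂ × ℂ →L[ℂ] ℂ}
    (hN : HasFDerivAt N N' p) (hD : HasFDerivAt D D' p) (hDp : D p ≠ 0)
    (h : D p • N' = N p • D') :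
    HasFDerivAt (fun q => N q / D q) (0 : ℂ × ℂ →L[ℂ] ℂ) p := by
  have hinv0 : HasFDerivAt (Inv.inv : ℂ → ℂ)
      (-ContinuousLinearMap.mulLeftRight ℂ ℂ (D p)⁻¹ (D p)⁻¹) (D p) := hasFDerivAt_inv' hDp
  have hinv : HasFDerivAt (fun q => (D q)⁻¹)
      ((-ContinuousLinearMap.mulLeftRight ℂ ℂ (D p)⁻¹ (D p)⁻¹).comp D') p :=
    hinv0.comp p hD
  have h2 := hN.mul hinv
  have e : (N * fun q => (D q)⁻¹) = fun q => N q / D q := by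
    funext q; rw [Pi.mul_apply, div_eq_mul_inv]
  rw [e] at h2
  refine h2.congr_fderiv (Eq.symm ?_)
  refine (ContinuousLinearMap.ext fun v => ?_).symm
  have hv := congrArg (fun (L : ℂ × ℂ →L[ℂ] ℂ) => L v) h
  simp only [ContinuousLinearMap.smul_apply, smul_eq_mul] at hv
  simp only [ContinuousLinearMap.add_apply, ContinuousLinearMap.smul_apply,
    ContinuousLinearMap.coe_comp', Function.comp_apply, ContinuousLinearMap.neg_apply,
    ContinuousLinearMap.mulLeftRight_apply, smul_eq_mul, ContinuousLinearMap.zero_apply]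
  field_simp
  linear_combination hv

private lemma crit_R (p : ℂ × ℂ)
    (hne : (p.2 + 8*p.1^2) * (p.1 - 1) *
        (p.2 + 8*p.1^2 + 4*p.2^2 + 5*p.2*p.1^2 - 14*p.1*p.2 - 4*p.1^3) ≠ 0)
    (h1 : ((p.2 + 8*p.1^2) * (p.1 - 1) *
        (p.2 + 8*p.1^2 + 4*p.2^2 + 5*p.2*p.1^2 - 14*p.1*p.2 - 4*p.1^3)) *
        (3*(p.2 - p.1^2)^2 * (-(2*p.1)))
      = (p.2 - p.1^2)^3 *
        ((16*p.1*(p.1-1) + (p.2 + 8*p.1^2)) *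
          (p.2 + 8*p.1^2 + 4*p.2^2 + 5*p.2*p.1^2 - 14*p.1*p.2 - 4*p.1^3)
        + (p.2 + 8*p.1^2)*(p.1-1)*(16*p.1 + 10*p.2*p.1 - 14*p.2 - 12*p.1^2)))
    (h2 : ((p.2 + 8*p.1^2) * (p.1 - 1) *
        (p.2 + 8*p.1^2 + 4*p.2^2 + 5*p.2*p.1^2 - 14*p.1*p.2 - 4*p.1^3)) *
        (3*(p.2 - p.1^2)^2)
      = (p.2 - p.1^2)^3 *
        ((p.1-1) * (p.2 + 8*p.1^2 + 4*p.2^2 + 5*p.2*p.1^2 - 14*p.1*p.2 - 4*p.1^3)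
        + (p.2 + 8*p.1^2)*(p.1-1)*(1 + 8*p.2 + 5*p.1^2 - 14*p.1))) :
    HasFDerivAt (fun q : ℂ × ℂ => (q.2 - q.1^2)^3 /
      ((q.2 + 8*q.1^2) * (q.1 - 1) *
        (q.2 + 8*q.1^2 + 4*q.2^2 + 5*q.2*q.1^2 - 14*q.1*q.2 - 4*q.1^3)))
      (0 : ℂ × ℂ →L[ℂ] ℂ) p := by
  have hx := hasFDerivAt_fst (𝕜 := ℂ) (E := ℂ) (F := ℂ) (p := p)
  have hy := hasFDerivAt_snd (𝕜 := ℂ) (E := ℂ) (F := ℂ) (p := p)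
  have hNum := cube_deriv' (hy.sub (sq_deriv' hx))
  have hA := hy.add ((sq_deriv' hx).const_mul 8)
  have hB := hx.sub_const 1
  have hC := ((((hy.add ((sq_deriv' hx).const_mul 8)).add
      ((sq_deriv' hy).const_mul 4)).add
      ((hy.const_mul 5).mul (sq_deriv' hx))).sub
      ((hx.const_mul 14).mul hy)).sub
      ((cube_deriv' hx).const_mul 4)
  have hDen := (hA.mul hB).mul hC
  refine quot_crit' hNum hDen hne ?_
  refine ContinuousLinearMap.ext fun v => ?_
  simp only [ContinuousLinearMap.smul_apply, ContinuousLinearMap.add_apply,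
    ContinuousLinearMap.sub_apply, ContinuousLinearMap.coe_fst',
    ContinuousLinearMap.coe_snd', smul_eq_mul, Pi.add_apply, Pi.sub_apply, Pi.mul_apply]
  linear_combination v.1 * h1 + v.2 * h2

private lemma crit_G (p : ℂ × ℂ)
    (hne : (p.2 - p.1^2)^3 ≠ 0)
    (h1 : (p.2 - p.1^2)^3 *
        ((16*p.1*(p.1-1) + (p.2 + 8*p.1^2)) *
          (p.2 + 8*p.1^2 + 4*p.2^2 + 5*p.2*p.1^2 - 14*p.1*p.2 - 4*p.1^3)
        + (p.2 + 8*p.1^2)*(p.1-1)*(16*p.1 + 10*p.2*p.1 - 14*p.2 - 12*p.1^2))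
      = ((p.2 + 8*p.1^2) * (p.1 - 1) *
        (p.2 + 8*p.1^2 + 4*p.2^2 + 5*p.2*p.1^2 - 14*p.1*p.2 - 4*p.1^3)) *
        (3*(p.2 - p.1^2)^2 * (-(2*p.1))))
    (h2 : (p.2 - p.1^2)^3 *
        ((p.1-1) * (p.2 + 8*p.1^2 + 4*p.2^2 + 5*p.2*p.1^2 - 14*p.1*p.2 - 4*p.1^3)
        + (p.2 + 8*p.1^2)*(p.1-1)*(1 + 8*p.2 + 5*p.1^2 - 14*p.1))
      = ((p.2 + 8*p.1^2) * (p.1 - 1) *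
        (p.2 + 8*p.1^2 + 4*p.2^2 + 5*p.2*p.1^2 - 14*p.1*p.2 - 4*p.1^3)) *
        (3*(p.2 - p.1^2)^2)) :
    HasFDerivAt (fun q : ℂ × ℂ =>
      ((q.2 + 8*q.1^2) * (q.1 - 1) *
        (q.2 + 8*q.1^2 + 4*q.2^2 + 5*q.2*q.1^2 - 14*q.1*q.2 - 4*q.1^3)) /
      (q.2 - q.1^2)^3) (0 : ℂ × ℂ →L[ℂ] ℂ) p := by
  have hx := hasFDerivAt_fst (𝕜 := ℂ) (E := ℂ) (F := ℂ) (p := p)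
  have hy := hasFDerivAt_snd (𝕜 := ℂ) (E := ℂ) (F := ℂ) (p := p)
  have hNum := cube_deriv' (hy.sub (sq_deriv' hx))
  have hA := hy.add ((sq_deriv' hx).const_mul 8)
  have hB := hx.sub_const 1
  have hC := ((((hy.add ((sq_deriv' hx).const_mul 8)).add
      ((sq_deriv' hy).const_mul 4)).add
      ((hy.const_mul 5).mul (sq_deriv' hx))).sub
      ((hx.const_mul 14).mul hy)).sub
      ((cube_deriv' hx).const_mul 4)
  have hDen := (hA.mul hB).mul hC
  refine quot_crit' hDen hNum hne ?_
  refine ContinuousLinearMap.ext fun v => ?_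
  simp only [ContinuousLinearMap.smul_apply, ContinuousLinearMap.add_apply,
    ContinuousLinearMap.sub_apply, ContinuousLinearMap.coe_fst',
    ContinuousLinearMap.coe_snd', smul_eq_mul, Pi.add_apply, Pi.sub_apply, Pi.mul_apply]
  linear_combination v.1 * h1 + v.2 * h2

/-- The true critical points of the type d integral `R_d`: `(2/5, 8/5)` with value `−1/3`,
`(1/10, −4/5)` with value `−9/32`, and the critical points `(1, −8)`, `(−1/2, −2)` of
`G_d = 1/R_d` with value `0` (i.e. value `∞` of `R_d`). -/
theorem stmt_16 (Rd Gd : ℂ × ℂ → ℂ)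
    (hRd : ∀ p : ℂ × ℂ, Rd p = (p.2 - p.1^2)^3 /
      ((p.2 + 8*p.1^2) * (p.1 - 1) *
        (p.2 + 8*p.1^2 + 4*p.2^2 + 5*p.2*p.1^2 - 14*p.1*p.2 - 4*p.1^3)))
    (hGd : ∀ p : ℂ × ℂ, Gd p =
      ((p.2 + 8*p.1^2) * (p.1 - 1) *
        (p.2 + 8*p.1^2 + 4*p.2^2 + 5*p.2*p.1^2 - 14*p.1*p.2 - 4*p.1^3)) /
      (p.2 - p.1^2)^3) :
    (fderiv ℂ Rd (2/5, 8/5) = 0 ∧ Rd (2/5, 8/5) = -1/3) ∧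
    (fderiv ℂ Rd (1/10, -4/5) = 0 ∧ Rd (1/10, -4/5) = -9/32) ∧
    (fderiv ℂ Gd (1, -8) = 0 ∧ Gd (1, -8) = 0) ∧
    (fderiv ℂ Gd (-1/2, -2) = 0 ∧ Gd (-1/2, -2) = 0) := by
  have hR : Rd = fun p : ℂ × ℂ => (p.2 - p.1^2)^3 /
      ((p.2 + 8*p.1^2) * (p.1 - 1) *
        (p.2 + 8*p.1^2 + 4*p.2^2 + 5*p.2*p.1^2 - 14*p.1*p.2 - 4*p.1^3)) := funext hRd
  have hG : Gd = fun p : ℂ × ℂ => ((p.2 + 8*p.1^2) * (p.1 - 1) *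
        (p.2 + 8*p.1^2 + 4*p.2^2 + 5*p.2*p.1^2 - 14*p.1*p.2 - 4*p.1^3)) /
      (p.2 - p.1^2)^3 := funext hGd
  subst hR hG
  refine ⟨⟨(crit_R _ (by norm_num) (by norm_num) (by norm_num)).fderiv, by norm_num⟩,
    ⟨(crit_R _ (by norm_num) (by norm_num) (by norm_num)).fderiv, by norm_num⟩,
    ⟨(crit_G _ (by norm_num) (by norm_num) (by norm_num)).fderiv, by norm_num⟩,
    ⟨(crit_G _ (by norm_num) (by norm_num) (by norm_num)).fderiv, by norm_num⟩⟩
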